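/- Let (N(ε,d)) be a family of positive integers satisfying ln N(ε,d) ≤ min{ε^{-1/α}, d} · ln(2(ε^{-1/α} + d)) for a fixed α > 0. If t > 1 and s > 0, then (ln N(ε_k, d_k)) / (ε_k^{-s} + d_k^t) → 0 whenever ε_k^{-1} + d_k → ∞. -/

import Mathlib

open Filter Topology Real

/-- `log y ≤ y ^ δ / δ` for `y > 0`, `δ > 0`. -/
lemma aux_log_le_rpow_div {y δ : ℝ} (hy : 0 < y) (hδ : 0 < δ) :
    Real.log y ≤ y ^ δ / δ := by
  rw [le_div_iff₀ hδ, mul_comm, ← Real.log_rpow hy]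
  have h1 := Real.log_le_sub_one_of_pos (Real.rpow_pos_of_pos hy δ)
  linarith

set_option maxHeartbeats 1000000 in
/-- If `ln N(ε,d) ≤ min{ε^{-1/α}, d} · ln(2(ε^{-1/α}+d))` then for `t > 1`, `s > 0`
the quotient `ln N(ε_k,d_k) / (ε_k^{-s} + d_k^t)` tends to `0` whenever
`ε_k⁻¹ + d_k → ∞`. -/
theorem stmt11 (α : ℝ) (hα : 0 < α) (N : ℝ → ℕ → ℕ) (hNpos : ∀ ε d, 0 < N ε d)
    (hN : ∀ ε : ℝ, 0 < ε → ε ≤ 1 → ∀ d : ℕ, 1 ≤ d →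
      Real.log (N ε d) ≤
        min (ε ^ (-(1 / α))) (d : ℝ) * Real.log (2 * (ε ^ (-(1 / α)) + (d : ℝ))))
    (s t : ℝ) (hs : 0 < s) (ht : 1 < t)
    (ε : ℕ → ℝ) (d : ℕ → ℕ) (hε : ∀ k, ε k ∈ Set.Ioc (0 : ℝ) 1) (hd : ∀ k, 1 ≤ d k)
    (hto : Tendsto (fun k => (ε k)⁻¹ + (d k : ℝ)) atTop atTop) :
    Tendsto (fun k => Real.log (N (ε k) (d k)) / ((ε k) ^ (-s) + (d k : ℝ) ^ t))
      atTop (nhds 0) := by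
  have ht0 : (0:ℝ) < t := lt_trans one_pos ht
  have h1t : 1/t < 1 := by rw [div_lt_one ht0]; exact ht
  set β : ℝ := α * s with hβdef
  have hβ : 0 < β := mul_pos hα hs
  set δ : ℝ := min (β * (1 - 1/t)) (t - 1) / 2 with hδdef
  have hmin : 0 < min (β * (1 - 1/t)) (t - 1) :=
    lt_min (mul_pos hβ (by linarith)) (by linarith)
  have hδ : 0 < δ := by rw [hδdef]; positivity
  have hδlt1 : δ < β * (1 - 1/t) := by
    have := min_le_left (β * (1 - 1/t)) (t - 1)
    rw [hδdef]; linarith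
  have hδlt2 : δ < t - 1 := by
    have := min_le_right (β * (1 - 1/t)) (t - 1)
    rw [hδdef]; linarith
  set γ1 : ℝ := 1/t + δ/β with hγ1def
  set γ2 : ℝ := (1+δ)/t with hγ2def
  have hγ1 : γ1 < 1 := by
    have h : δ/β < 1 - 1/t := by rw [div_lt_iff₀ hβ]; nlinarith
    rw [hγ1def]; linarith
  have hγ2 : γ2 < 1 := by
    rw [hγ2def, div_lt_one ht0]; linarith
  -- abbreviations
  set A : ℕ → ℝ := fun k => (ε k) ^ (-s) with hAdef
  set B : ℕ → ℝ := fun k => (d k : ℝ) ^ t with hBdef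
  set S : ℕ → ℝ := fun k => A k + B k with hSdef
  have hε1 : ∀ k, 0 < ε k := fun k => (hε k).1
  have hε2 : ∀ k, ε k ≤ 1 := fun k => (hε k).2
  have hd1 : ∀ k, (1:ℝ) ≤ (d k : ℝ) := fun k => by exact_mod_cast hd k
  have hAeq : ∀ k, A k = ((ε k)⁻¹) ^ s := fun k => by
    rw [hAdef]; dsimp only
    rw [Real.rpow_neg (hε1 k).le, ← Real.inv_rpow (hε1 k).le]
  have hA1 : ∀ k, 1 ≤ A k := fun k => by
    rw [hAeq k]
    exact Real.one_le_rpow (one_le_inv_iff₀.mpr ⟨hε1 k, hε2 k⟩) hs.le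
  have hB1 : ∀ k, 1 ≤ B k := fun k => Real.one_le_rpow (hd1 k) ht0.le
  have hSAB : ∀ k, S k = A k + B k := fun k => rfl
  have hSpos : ∀ k, 0 < S k := fun k => by
    have := hA1 k; have := hB1 k; rw [hSAB]; linarith
  -- S tends to infinity
  have hm : 0 < min s t := lt_min hs ht0
  have hSto : Tendsto S atTop atTop := by
    have hu2 : Tendsto (fun k => ((ε k)⁻¹ + (d k : ℝ)) / 2) atTop atTop :=
      hto.atTop_div_const two_pos
    have hpow : Tendsto (fun k => (((ε k)⁻¹ + (d k : ℝ)) / 2) ^ min s t) atTop atTop :=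
      (tendsto_rpow_atTop hm).comp hu2
    apply tendsto_atTop_mono' atTop _ hpow
    filter_upwards [hto.eventually_ge_atTop 2] with k hk
    have hu1 : 1 ≤ ((ε k)⁻¹ + (d k : ℝ)) / 2 := by
      linarith
    rcases le_total ((ε k)⁻¹) (d k : ℝ) with hcase | hcase
    · -- d k ≥ u/2, use B
      have hdu : ((ε k)⁻¹ + (d k : ℝ)) / 2 ≤ (d k : ℝ) := by linarith
      have h1 : (((ε k)⁻¹ + (d k : ℝ)) / 2) ^ min s t
          ≤ (((ε k)⁻¹ + (d k : ℝ)) / 2) ^ t :=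
        Real.rpow_le_rpow_of_exponent_le hu1 (min_le_right s t)
      have h2 : (((ε k)⁻¹ + (d k : ℝ)) / 2) ^ t ≤ B k := by
        rw [hBdef]; dsimp only
        exact Real.rpow_le_rpow (by linarith) hdu ht0.le
      have := hA1 k
      rw [hSAB]; linarith
    · -- ε⁻¹ ≥ u/2, use A
      have hdu : ((ε k)⁻¹ + (d k : ℝ)) / 2 ≤ (ε k)⁻¹ := by linarith
      have h1 : (((ε k)⁻¹ + (d k : ℝ)) / 2) ^ min s t
          ≤ (((ε k)⁻¹ + (d k : ℝ)) / 2) ^ s :=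
        Real.rpow_le_rpow_of_exponent_le hu1 (min_le_left s t)
      have h2 : (((ε k)⁻¹ + (d k : ℝ)) / 2) ^ s ≤ A k := by
        rw [hAeq k]; exact Real.rpow_le_rpow (by linarith) hdu hs.le
      have := hB1 k
      rw [hSAB]; linarith
  -- the key pointwise bound
  set C : ℝ := (4:ℝ) ^ δ / δ with hCdef
  have hC : 0 < C := by rw [hCdef]; positivity
  have hkey : ∀ k, Real.log (N (ε k) (d k)) ≤ C * ((S k) ^ γ1 + (S k) ^ γ2) := by
    intro k
    set x : ℝ := (ε k) ^ (-(1/α)) with hxdef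
    have hxpos : 0 < x := Real.rpow_pos_of_pos (hε1 k) _
    have hD1 : (1:ℝ) ≤ (d k : ℝ) := hd1 k
    have hDpos : (0:ℝ) < (d k : ℝ) := by linarith
    have hlog1 : Real.log (N (ε k) (d k)) ≤ (d k : ℝ) * Real.log (2 * (x + (d k : ℝ))) := by
      refine le_trans (hN (ε k) (hε1 k) (hε2 k) (d k) (hd k)) ?_
      apply mul_le_mul_of_nonneg_right (min_le_right _ _)
      apply Real.log_nonneg; nlinarith
    have hlog2 : Real.log (2 * (x + (d k : ℝ))) ≤ (2 * (x + (d k : ℝ))) ^ δ / δ :=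
      aux_log_le_rpow_div (by nlinarith) hδ
    have hrp : (2 * (x + (d k : ℝ))) ^ δ ≤ (4:ℝ) ^ δ * (x ^ δ + (d k : ℝ) ^ δ) := by
      rcases le_total x (d k : ℝ) with hc | hc
      · calc (2 * (x + (d k : ℝ))) ^ δ ≤ (4 * (d k : ℝ)) ^ δ :=
              Real.rpow_le_rpow (by linarith) (by linarith) hδ.le
          _ = (4:ℝ) ^ δ * (d k : ℝ) ^ δ := Real.mul_rpow (by norm_num) hDpos.le
          _ ≤ (4:ℝ) ^ δ * (x ^ δ + (d k : ℝ) ^ δ) :=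
              mul_le_mul_of_nonneg_left
                (le_add_of_nonneg_left (Real.rpow_nonneg hxpos.le δ))
                (Real.rpow_nonneg (by norm_num) δ)
      · calc (2 * (x + (d k : ℝ))) ^ δ ≤ (4 * x) ^ δ :=
              Real.rpow_le_rpow (by linarith) (by linarith) hδ.le
          _ = (4:ℝ) ^ δ * x ^ δ := Real.mul_rpow (by norm_num) hxpos.le
          _ ≤ (4:ℝ) ^ δ * (x ^ δ + (d k : ℝ) ^ δ) := by
              have h0 := Real.rpow_nonneg hDpos.le δ
              have h4 : (0:ℝ) ≤ (4:ℝ) ^ δ := Real.rpow_nonneg (by norm_num) δ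
              nlinarith [mul_nonneg h4 h0]
    -- bound D * x^δ and D^(1+δ) by powers of S
    have hDB : (d k : ℝ) ≤ (S k) ^ (1/t) := by
      have h1 : (d k : ℝ) = (B k) ^ (1/t) := by
        rw [hBdef]; dsimp only
        rw [← Real.rpow_mul hDpos.le, mul_one_div_cancel ht0.ne', Real.rpow_one]
      rw [h1]
      apply Real.rpow_le_rpow (by linarith [hB1 k]) _ (by positivity)
      have := hA1 k; rw [hSAB]; linarith
    have hxA : x ^ δ ≤ (S k) ^ (δ/β) := by
      have hx : x ^ δ = (A k) ^ (δ/β) := by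
        rw [hxdef, hAdef]; dsimp only
        rw [← Real.rpow_mul (hε1 k).le, ← Real.rpow_mul (hε1 k).le]
        congr 1
        rw [hβdef]
        field_simp
      rw [hx]
      apply Real.rpow_le_rpow (by linarith [hA1 k]) _ (by positivity)
      have := hB1 k; rw [hSAB]; linarith
    have hDδ : (d k : ℝ) * (d k : ℝ) ^ δ ≤ (S k) ^ γ2 := by
      have h1 : (d k : ℝ) * (d k : ℝ) ^ δ = (B k) ^ γ2 := by
        rw [hBdef, hγ2def]; dsimp only
        rw [← Real.rpow_mul hDpos.le]
        have h2 : t * ((1+δ)/t) = 1 + δ := by field_simp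
        rw [h2, Real.rpow_add hDpos, Real.rpow_one]
      rw [h1]
      apply Real.rpow_le_rpow (by linarith [hB1 k]) _ (by rw [hγ2def]; positivity)
      have := hA1 k; rw [hSAB]; linarith
    have hDx : (d k : ℝ) * x ^ δ ≤ (S k) ^ γ1 := by
      calc (d k : ℝ) * x ^ δ ≤ (S k) ^ (1/t) * (S k) ^ (δ/β) :=
            mul_le_mul hDB hxA (Real.rpow_nonneg hxpos.le δ)
              (Real.rpow_nonneg (hSpos k).le _)
        _ = (S k) ^ γ1 := by rw [hγ1def, ← Real.rpow_add (hSpos k)]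
    -- put everything together
    calc Real.log (N (ε k) (d k)) ≤ (d k : ℝ) * Real.log (2 * (x + (d k : ℝ))) := hlog1
      _ ≤ (d k : ℝ) * ((2 * (x + (d k : ℝ))) ^ δ / δ) :=
          mul_le_mul_of_nonneg_left hlog2 hDpos.le
      _ ≤ (d k : ℝ) * (((4:ℝ) ^ δ * (x ^ δ + (d k : ℝ) ^ δ)) / δ) := by
          gcongr
      _ = C * ((d k : ℝ) * x ^ δ + (d k : ℝ) * (d k : ℝ) ^ δ) := by
          rw [hCdef]; ring
      _ ≤ C * ((S k) ^ γ1 + (S k) ^ γ2) := by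
          apply mul_le_mul_of_nonneg_left _ hC.le
          linarith
  -- squeeze
  have hf0 : ∀ k, 0 ≤ Real.log (N (ε k) (d k)) / ((ε k) ^ (-s) + (d k : ℝ) ^ t) := by
    intro k
    apply div_nonneg
    · apply Real.log_nonneg; exact_mod_cast hNpos (ε k) (d k)
    · exact (hSpos k).le
  have hfg : ∀ k, Real.log (N (ε k) (d k)) / ((ε k) ^ (-s) + (d k : ℝ) ^ t) ≤
      C * ((S k) ^ (γ1 - 1) + (S k) ^ (γ2 - 1)) := by
    intro k
    have hSk := hSpos k
    have heq : C * ((S k) ^ (γ1 - 1) + (S k) ^ (γ2 - 1)) =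
        C * ((S k) ^ γ1 + (S k) ^ γ2) / S k := by
      rw [Real.rpow_sub hSk, Real.rpow_sub hSk, Real.rpow_one,
        ← add_div, mul_div_assoc]
    have hSeq : (ε k) ^ (-s) + (d k : ℝ) ^ t = S k := rfl
    rw [hSeq, heq]
    exact (div_le_div_iff_of_pos_right hSk).mpr (hkey k)
  have hg : Tendsto (fun k => C * ((S k) ^ (γ1 - 1) + (S k) ^ (γ2 - 1))) atTop (nhds 0) := by
    have h1 : Tendsto (fun k => (S k) ^ (γ1 - 1)) atTop (nhds 0) := by
      have h := (tendsto_rpow_neg_atTop (by linarith : 0 < 1 - γ1)).comp hSto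
      rw [show γ1 - 1 = -(1 - γ1) by ring]
      exact h
    have h2 : Tendsto (fun k => (S k) ^ (γ2 - 1)) atTop (nhds 0) := by
      have h := (tendsto_rpow_neg_atTop (by linarith : 0 < 1 - γ2)).comp hSto
      rw [show γ2 - 1 = -(1 - γ2) by ring]
      exact h
    simpa only [add_zero, mul_zero] using ((h1.add h2).const_mul C)
  exact squeeze_zero hf0 hfg hg
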